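/- Let a = 2cos(π/15). Then β = 92a³ + 272a² + 164a − 47 satisfies β > 1 and is a Pisot number. -/

import Mathlib

/-- A Pisot number: a real algebraic integer `β > 1` all of whose Galois conjugates
(the other complex roots of its minimal polynomial over `ℚ`) have modulus `< 1`. -/
def IsPisot (β : ℝ) : Prop :=
  1 < β ∧ IsIntegral ℤ β ∧
    ∀ z : ℂ, z ≠ (β : ℂ) → Polynomial.aeval z (minpoly ℚ β) = 0 → ‖z‖ < 1

/-- `a = 2 cos (π/15)`. -/
noncomputable def a15 : ℝ := 2 * Real.cos (Real.pi / 15)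

lemma cos_five (x : ℝ) :
    Real.cos (5 * x) = 16 * Real.cos x ^ 5 - 20 * Real.cos x ^ 3 + 5 * Real.cos x := by
  have h : (5 : ℝ) * x = 2 * x + 3 * x := by ring
  rw [h, Real.cos_add, Real.cos_two_mul, Real.cos_three_mul, Real.sin_two_mul,
    Real.sin_three_mul]
  have hs : Real.sin x ^ 2 = 1 - Real.cos x ^ 2 := Real.sin_sq x
  linear_combination (-6 * Real.cos x + 8 * Real.cos x * (Real.sin x ^ 2 + 1 - Real.cos x ^ 2)) * hs

lemma a15_quintic : a15 ^ 5 - 5 * a15 ^ 3 + 5 * a15 - 1 = 0 := by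
  have h1 : Real.cos (5 * (Real.pi / 15)) = 1 / 2 := by
    rw [show 5 * (Real.pi / 15) = Real.pi / 3 by ring, Real.cos_pi_div_three]
  have h2 := cos_five (Real.pi / 15)
  rw [h1] at h2
  unfold a15
  nlinarith [h2]

lemma a15_gt : (1.7 : ℝ) < a15 := by
  have h1 : Real.cos (Real.pi / 6) < Real.cos (Real.pi / 15) := by
    apply Real.cos_lt_cos_of_nonneg_of_le_pi (by positivity)
    · linarith [Real.pi_pos]
    · linarith [Real.pi_pos]
  rw [Real.cos_pi_div_six] at h1
  have h2 : (1.7 : ℝ) < Real.sqrt 3 := by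
    rw [show (1.7:ℝ) = Real.sqrt (1.7^2) by rw [Real.sqrt_sq]; norm_num]
    apply Real.sqrt_lt_sqrt <;> norm_num
  unfold a15
  nlinarith [h1, h2]

lemma a15_quartic : a15 ^ 4 + a15 ^ 3 - 4 * a15 ^ 2 - 4 * a15 + 1 = 0 := by
  have h := a15_quintic
  have hne : a15 - 1 ≠ 0 := by have := a15_gt; intro h; nlinarith
  have hfac : (a15 - 1) * (a15 ^ 4 + a15 ^ 3 - 4 * a15 ^ 2 - 4 * a15 + 1) = 0 := by
    linarith [h, (by ring : (a15 - 1) * (a15 ^ 4 + a15 ^ 3 - 4 * a15 ^ 2 - 4 * a15 + 1)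
      = a15 ^ 5 - 5 * a15 ^ 3 + 5 * a15 - 1)]
  rcases mul_eq_zero.1 hfac with h' | h'
  · exact absurd h' hne
  · exact h'

lemma beta_root : (92 * a15 ^ 3 + 272 * a15 ^ 2 + 164 * a15 - 47) ^ 4
    - 2004 * (92 * a15 ^ 3 + 272 * a15 ^ 2 + 164 * a15 - 47) ^ 3
    + 806 * (92 * a15 ^ 3 + 272 * a15 ^ 2 + 164 * a15 - 47) ^ 2
    - 84 * (92 * a15 ^ 3 + 272 * a15 ^ 2 + 164 * a15 - 47) + 1 = 0 := by
  linear_combination (71639296 * a15 ^ 8 + 775573248 * a15 ^ 7 + 3779006720 * a15 ^ 6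
    + 9839207168 * a15 ^ 5 + 13402919424 * a15 ^ 4 + 7684174592 * a15 ^ 3
    - 507582720 * a15 ^ 2 - 1399648768 * a15 + 214725376) * a15_quartic

open Polynomial in
theorem stmt_18 :
    1 < 92 * a15 ^ 3 + 272 * a15 ^ 2 + 164 * a15 - 47 ∧
    IsPisot (92 * a15 ^ 3 + 272 * a15 ^ 2 + 164 * a15 - 47) := by
  set β : ℝ := 92 * a15 ^ 3 + 272 * a15 ^ 2 + 164 * a15 - 47 with hβ
  have ha := a15_gt
  have hb1 : (1 : ℝ) < β := by rw [hβ]; nlinarith [ha]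
  have hroot : β ^ 4 - 2004 * β ^ 3 + 806 * β ^ 2 - 84 * β + 1 = 0 := beta_root
  refine ⟨hb1, hb1, ?_, ?_⟩
  · -- integrality
    refine ⟨X ^ 4 - C 2004 * X ^ 3 + C 806 * X ^ 2 - C 84 * X + C 1, ?_, ?_⟩
    · monicity!
    · rw [← Polynomial.aeval_def]
      simp only [map_add, map_sub, map_mul, map_pow, map_one, map_ofNat, aeval_X, aeval_C]
      linear_combination hroot
  · -- conjugates
    intro z hzne hz
    -- z is a root of the rational quartic
    have hQ : aeval β (X ^ 4 - C 2004 * X ^ 3 + C 806 * X ^ 2 - C 84 * X + C 1 : ℚ[X]) = 0 := by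
      simp only [map_add, map_sub, map_mul, map_pow, map_one, map_ofNat, aeval_X, aeval_C]
      linear_combination hroot
    obtain ⟨c, hc⟩ := minpoly.dvd ℚ β hQ
    have hzQ : aeval z (X ^ 4 - C 2004 * X ^ 3 + C 806 * X ^ 2 - C 84 * X + C 1 : ℚ[X]) = 0 := by
      rw [hc, map_mul, hz, zero_mul]
    have hz4 : z ^ 4 - 2004 * z ^ 3 + 806 * z ^ 2 - 84 * z + 1 = 0 := by
      simpa only [map_add, map_sub, map_mul, map_pow, map_one, map_ofNat, aeval_X, aeval_C] using hzQ
    -- find the three small real roots by IVT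
    set qf : ℝ → ℝ := fun x => x ^ 4 - 2004 * x ^ 3 + 806 * x ^ 2 - 84 * x + 1 with hqf
    have hcont : Continuous qf := by fun_prop
    have ivt : ∀ u v : ℝ, u ≤ v → qf u ≤ 0 → 0 ≤ qf v →
        ∃ x ∈ Set.Icc u v, qf x = 0 := by
      intro u v huv h1 h2
      have := intermediate_value_Icc huv hcont.continuousOn
      obtain ⟨x, hx, hx0⟩ := this ⟨h1, h2⟩
      exact ⟨x, hx, hx0⟩
    have ivt' : ∀ u v : ℝ, u ≤ v → 0 ≤ qf u → qf v ≤ 0 →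
        ∃ x ∈ Set.Icc u v, qf x = 0 := by
      intro u v huv h1 h2
      have := intermediate_value_Icc' huv hcont.continuousOn
      obtain ⟨x, hx, hx0⟩ := this ⟨h2, h1⟩
      exact ⟨x, hx, hx0⟩
    obtain ⟨x1, hx1m, hx1⟩ : ∃ x ∈ Set.Icc (0.01 : ℝ) 0.02, qf x = 0 := by
      apply ivt' <;> norm_num [hqf]
    obtain ⟨x2, hx2m, hx2⟩ : ∃ x ∈ Set.Icc (0.12 : ℝ) 0.18, qf x = 0 := by
      apply ivt <;> norm_num [hqf]
    obtain ⟨x3, hx3m, hx3⟩ : ∃ x ∈ Set.Icc (0.2 : ℝ) 0.26, qf x = 0 := by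
      apply ivt' <;> norm_num [hqf]
    obtain ⟨hx1l, hx1u⟩ := hx1m
    obtain ⟨hx2l, hx2u⟩ := hx2m
    obtain ⟨hx3l, hx3u⟩ := hx3m
    simp only [hqf] at hx1 hx2 hx3
    -- the complex quartic
    set P : ℂ[X] := X ^ 4 - C 2004 * X ^ 3 + C 806 * X ^ 2 - C 84 * X + C 1 with hP
    have hPdeg : P.natDegree = 4 := by rw [hP]; compute_degree!
    have hPne : P ≠ 0 := fun h => by rw [h] at hPdeg; simp at hPdeg
    have hPeval : ∀ w : ℂ, P.eval w = w ^ 4 - 2004 * w ^ 3 + 806 * w ^ 2 - 84 * w + 1 := by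
      intro w; simp [hP]
    have hmem : ∀ w : ℝ, w ^ 4 - 2004 * w ^ 3 + 806 * w ^ 2 - 84 * w + 1 = 0 →
        (w : ℂ) ∈ P.roots := by
      intro w hw
      rw [mem_roots hPne, IsRoot, hPeval]
      exact_mod_cast congrArg (Complex.ofReal) hw
    have hβm : (β : ℂ) ∈ P.roots := hmem β hroot
    have h1m : (x1 : ℂ) ∈ P.roots := hmem x1 hx1
    have h2m : (x2 : ℂ) ∈ P.roots := hmem x2 hx2
    have h3m : (x3 : ℂ) ∈ P.roots := hmem x3 hx3
    have hzm : z ∈ P.roots := by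
      rw [mem_roots hPne, IsRoot, hPeval]; exact hz4
    set s : Multiset ℂ := {(β : ℂ), (x1 : ℂ), (x2 : ℂ), (x3 : ℂ)} with hs
    have hd12 : (x1 : ℂ) ≠ (x2 : ℂ) := by exact_mod_cast ne_of_lt (by linarith : x1 < x2)
    have hd13 : (x1 : ℂ) ≠ (x3 : ℂ) := by exact_mod_cast ne_of_lt (by linarith : x1 < x3)
    have hd23 : (x2 : ℂ) ≠ (x3 : ℂ) := by exact_mod_cast ne_of_lt (by linarith : x2 < x3)
    have hdb1 : (β : ℂ) ≠ (x1 : ℂ) := by exact_mod_cast ne_of_gt (by linarith : x1 < β)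
    have hdb2 : (β : ℂ) ≠ (x2 : ℂ) := by exact_mod_cast ne_of_gt (by linarith : x2 < β)
    have hdb3 : (β : ℂ) ≠ (x3 : ℂ) := by exact_mod_cast ne_of_gt (by linarith : x3 < β)
    have hnodup : s.Nodup := by
      simp [hs, hd12, hd13, hd23, hdb1, hdb2, hdb3]
    have hle : s ≤ P.roots := by
      rw [Multiset.le_iff_subset hnodup]
      intro w hw
      simp only [hs, Multiset.insert_eq_cons, Multiset.mem_cons, Multiset.mem_singleton] at hw
      rcases hw with h | h | h | h <;> (subst h; assumption)
    have hcard : Multiset.card P.roots ≤ Multiset.card s := by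
      have := P.card_roots' 
      rw [hPdeg] at this
      simpa [hs] using this
    have heq : s = P.roots := Multiset.eq_of_le_of_card_le hle hcard
    rw [← heq] at hzm
    simp only [hs, Multiset.insert_eq_cons, Multiset.mem_cons, Multiset.mem_singleton] at hzm
    rcases hzm with h | h | h | h
    · exact absurd h hzne
    all_goals (subst h; rw [Complex.norm_real, Real.norm_eq_abs]; rw [abs_lt]; constructor <;> linarith)
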